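/- Let x ∈ [0,1]^m and y ∈ [0,1]^n. Define x⁰ ∈ {0,1}^m by x⁰_i = 1 iff c_i + Σ_j q_{ij} y_j > 0, and y⁰ ∈ {0,1}^n by y⁰_j = 1 iff d_j + Σ_i q_{ij} x⁰_i > 0. Then f(x⁰, y⁰) ≥ f(x, y), where f is the bilinear objective extended to the box. -/

import Mathlib

open Finset

/-- The bipartite boolean quadratic objective f(x,y) = xᵀQy + c·x + d·y,
extended to real vectors. -/
noncomputable def fobj (m n : ℕ) (Q : Fin m → Fin n → ℝ) (c : Fin m → ℝ) (d : Fin n → ℝ)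
    (x : Fin m → ℝ) (y : Fin n → ℝ) : ℝ :=
  (∑ i, ∑ j, Q i j * x i * y j) + (∑ i, c i * x i) + (∑ j, d j * y j)

/-- A boolean vector viewed as a real 0-1 vector. -/
def bv {k : ℕ} (x : Fin k → Bool) : Fin k → ℝ := fun i => if x i then 1 else 0

/-- The average of f over all 2^(m+n) boolean pairs (x,y). -/
noncomputable def avgA (m n : ℕ) (Q : Fin m → Fin n → ℝ) (c : Fin m → ℝ) (d : Fin n → ℝ) : ℝ :=
  (∑ x : Fin m → Bool, ∑ y : Fin n → Bool, fobj m n Q c d (bv x) (bv y)) / 2 ^ (m + n)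

lemma key_round (t z : ℝ) (hz : z ∈ Set.Icc (0 : ℝ) 1) (b : Bool)
    (hb : b = true ↔ 0 < t) : z * t ≤ (if b then (1:ℝ) else 0) * t := by
  cases b with
  | true =>
    have ht : 0 < t := hb.mp rfl
    simp only [if_true]
    nlinarith [hz.1, hz.2]
  | false =>
    have ht : t ≤ 0 := by
      by_contra h
      exact absurd (hb.mpr (lt_of_not_ge h)) (by simp)
    simpa using mul_nonpos_of_nonneg_of_nonpos hz.1 ht

theorem RxOy_rounding (m n : ℕ)
    (Q : Fin m → Fin n → ℝ) (c : Fin m → ℝ) (d : Fin n → ℝ)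
    (x : Fin m → ℝ) (y : Fin n → ℝ)
    (hx : ∀ i, x i ∈ Set.Icc (0 : ℝ) 1) (hy : ∀ j, y j ∈ Set.Icc (0 : ℝ) 1)
    (xzero : Fin m → Bool)
    (hxz : ∀ i, xzero i = true ↔ 0 < c i + ∑ j, Q i j * y j)
    (yzero : Fin n → Bool)
    (hyz : ∀ j, yzero j = true ↔ 0 < d j + ∑ i, Q i j * bv xzero i) :
    fobj m n Q c d x y ≤ fobj m n Q c d (bv xzero) (bv yzero) := by
  have repr1 : ∀ z : Fin m → ℝ, fobj m n Q c d z y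
      = (∑ i, z i * (c i + ∑ j, Q i j * y j)) + ∑ j, d j * y j := by
    intro z
    unfold fobj
    have h : ∀ i : Fin m, z i * (c i + ∑ j, Q i j * y j)
        = c i * z i + ∑ j, Q i j * z i * y j := fun i => by
      rw [mul_add, Finset.mul_sum]
      congr 1
      · ring
      · exact Finset.sum_congr rfl fun j _ => by ring
    simp only [h, Finset.sum_add_distrib]
    ring
  have repr2 : ∀ w : Fin n → ℝ, fobj m n Q c d (bv xzero) w
      = (∑ j, w j * (d j + ∑ i, Q i j * bv xzero i)) + ∑ i, c i * bv xzero i := by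
    intro w
    unfold fobj
    have h : ∀ j : Fin n, w j * (d j + ∑ i, Q i j * bv xzero i)
        = d j * w j + ∑ i, Q i j * bv xzero i * w j := fun j => by
      rw [mul_add, Finset.mul_sum]
      congr 1
      · ring
      · exact Finset.sum_congr rfl fun i _ => by ring
    simp only [h, Finset.sum_add_distrib]
    rw [Finset.sum_comm]
    ring
  have h1 : fobj m n Q c d x y ≤ fobj m n Q c d (bv xzero) y := by
    rw [repr1 x, repr1 (bv xzero)]
    refine add_le_add_left (Finset.sum_le_sum fun i _ => ?_) _
    exact key_round _ _ (hx i) _ (hxz i)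
  have h2 : fobj m n Q c d (bv xzero) y ≤ fobj m n Q c d (bv xzero) (bv yzero) := by
    rw [repr2 y, repr2 (bv yzero)]
    refine add_le_add_left (Finset.sum_le_sum fun j _ => ?_) _
    exact key_round _ _ (hy j) _ (hyz j)
  exact h1.trans h2
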